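/- Suppose λ₁, λ₂, λ₃, λ₄ ∈ A satisfy the Cayley–Hamilton relation ∏_{i=1}^{4} (E − λᵢ • e) = 0 in L (product with respect to ∘). Then for every integer k ≥ 1: ∑_{i=1}^{4} ( (1−k)·E^k − (δ(E^k)(λᵢ)) • e + k·(λᵢ • E^{k−1}) ) ∘ ∏_{j ≠ i} (E − λⱼ • e) = 0, where (1−k)· and k· denote integer and natural-number scalar actions on the additive group of L, respectively. -/

import Mathlib

open Finset

/-- `P_U(V,W) := [U, V∘W] − [U,V]∘W − V∘[U,W]`, where the ring multiplication plays
the role of `∘` and `br` is the Lie bracket. -/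
def Pform {L : Type*} [Mul L] [Sub L] (br : L → L → L) (U V W : L) : L :=
  br U (V * W) - br U V * W - V * br U W

/-- if `λ₁,…,λ₄ ∈ A` satisfy the Cayley–Hamilton relation
`∏ᵢ (E − λᵢ • e) = 0`, then for every `k ≥ 1`:
`∑ᵢ ((1−k)·E^k − (δ(E^k)(λᵢ)) • e + k·(λᵢ • E^{k−1})) ∘ ∏_{j≠i} (E − λⱼ • e) = 0`. -/
theorem euler_cayley_hamilton_derivative {A L : Type*} [CommRing A] [CommRing L]
    [Algebra A L] (br : L → L → L)
    (hadd_left : ∀ x y z : L, br (x + y) z = br x z + br y z)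
    (hadd_right : ∀ x y z : L, br x (y + z) = br x y + br x z)
    (halt : ∀ x : L, br x x = 0)
    (hjacobi : ∀ x y z : L, br x (br y z) + br y (br z x) + br z (br x y) = 0)
    (δ : L → A → A)
    (hLeib : ∀ (V W : L) (a : A), br V (a • W) = a • br V W + δ V a • W)
    (hF : ∀ U V W Z : L,
      Pform br (U * V) W Z = U * Pform br V W Z + V * Pform br U W Z)
    (E : L) (hE : ∀ V W : L, Pform br E V W = V * W)
    (lam : Fin 4 → A)
    (hCH : ∏ i : Fin 4, (E - lam i • (1 : L)) = 0) :
    ∀ k : ℕ, 1 ≤ k →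
      ∑ i : Fin 4,
        (((1 : ℤ) - (k : ℤ)) • E ^ k - δ (E ^ k) (lam i) • (1 : L)
            + k • (lam i • E ^ (k - 1)))
          * ∏ j ∈ univ.erase i, (E - lam j • (1 : L)) = 0 := by
  -- basic additivity consequences
  intro k hk
  obtain ⟨m, rfl⟩ : ∃ m, k = m + 1 := ⟨k - 1, (Nat.succ_pred_eq_of_pos hk).symm⟩
  -- basic additivity consequences
  have br0 : ∀ x : L, br x 0 = 0 := by
    intro x
    have h := hadd_right x 0 0
    simp only [add_zero] at h
    exact left_eq_add.mp h
  have br0' : ∀ x : L, br 0 x = 0 := by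
    intro x
    have h := hadd_left 0 0 x
    simp only [add_zero] at h
    exact left_eq_add.mp h
  have brsub : ∀ x y z : L, br x (y - z) = br x y - br x z := by
    intro x y z
    have h := hadd_right x (y - z) z
    rw [sub_add_cancel] at h
    linear_combination -h
  have hanti : ∀ x y : L, br x y = - br y x := by
    intro x y
    have h := halt (x + y)
    rw [hadd_left, hadd_right, hadd_right, halt, halt] at h
    linear_combination h
  -- Pform of powers of E
  have hP1 : ∀ V W : L, Pform br 1 V W = 0 := by
    intro V W
    have h := hF 1 1 V W
    simp only [mul_one, one_mul] at h
    linear_combination -h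
  have hPk : ∀ (n : ℕ) (V W : L),
      Pform br (E ^ (n + 1)) V W = ((n : L) + 1) * (E ^ n * (V * W)) := by
    intro n
    induction n with
    | zero => intro V W; simp [hE V W]
    | succ n ih =>
      intro V W
      have h := hF (E ^ (n + 1)) E V W
      rw [hE, ih] at h
      have hpow : E ^ (n + 1) * E = E ^ (n + 2) := (pow_succ E (n + 1)).symm
      have hpow2 : E * E ^ n = E ^ (n + 1) := (pow_succ' E n).symm
      rw [hpow] at h
      rw [h]
      push_cast
      linear_combination (((n : L) + 1) * (V * W)) * hpow2
  -- bracket of E with powers of E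
  have brEE : ∀ n : ℕ, br E (E ^ (n + 1)) = (n : L) * E ^ (n + 1) := by
    intro n
    induction n with
    | zero => simp [pow_one, halt]
    | succ n ih =>
      have h := hE (E ^ (n + 1)) E
      simp only [Pform] at h
      rw [halt, mul_zero, sub_zero, ih, ← pow_succ] at h
      push_cast
      linear_combination h
  -- bracket of E^k with 1
  have br1 : br (E ^ (m + 1)) 1 = -(((m : L) + 1) * E ^ m) := by
    have h := hPk m 1 1
    simp only [Pform, mul_one, one_mul] at h
    linear_combination -h
  -- bracket of E^k with each factor
  set U := E ^ (m + 1) with hU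
  have hD : ∀ i : Fin 4,
      br U (E - lam i • (1 : L)) =
        ((1 : ℤ) - ((m + 1 : ℕ) : ℤ)) • E ^ (m + 1) - δ (E ^ (m + 1)) (lam i) • (1 : L)
          + (m + 1) • (lam i • E ^ (m + 1 - 1)) := by
    intro i
    rw [brsub, hLeib]
    have h1 : br U E = -((m : L) * E ^ (m + 1)) := by
      rw [hanti, brEE]
    rw [h1, br1, hU]
    have hz : ((1 : ℤ) - ((m + 1 : ℕ) : ℤ)) • E ^ (m + 1) = -((m : L) * E ^ (m + 1)) := by
      have : ((1 : ℤ) - ((m + 1 : ℕ) : ℤ)) = -(m : ℤ) := by push_cast; ring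
      rw [this, neg_zsmul, zsmul_eq_mul]
      push_cast
      ring
    have hn : (m + 1) • (lam i • E ^ (m + 1 - 1)) = lam i • (((m : L) + 1) * E ^ m) := by
      rw [Nat.add_sub_cancel, ← smul_comm (lam i), nsmul_eq_mul]
      push_cast
      ring_nf
    rw [hz, hn, smul_neg]
    ring
  -- rewrite the goal using hD
  have hgoal : ∀ i : Fin 4,
      (((1 : ℤ) - ((m + 1 : ℕ) : ℤ)) • E ^ (m + 1) - δ (E ^ (m + 1)) (lam i) • (1 : L)
          + (m + 1) • (lam i • E ^ (m + 1 - 1)))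
        = br U (E - lam i • (1 : L)) := fun i => (hD i).symm
  rw [← hU] at hgoal
  simp only [hgoal]
  rw [Fin.sum_univ_four]
  have e0 : ∏ j ∈ univ.erase (0 : Fin 4), (E - lam j • (1 : L))
      = (E - lam 1 • (1:L)) * ((E - lam 2 • (1:L)) * (E - lam 3 • (1:L))) := by
    rw [show univ.erase (0 : Fin 4) = {1, 2, 3} from by decide,
      Finset.prod_insert (by decide), Finset.prod_insert (by decide),
      Finset.prod_singleton]
  have e1 : ∏ j ∈ univ.erase (1 : Fin 4), (E - lam j • (1 : L))
      = (E - lam 0 • (1:L)) * ((E - lam 2 • (1:L)) * (E - lam 3 • (1:L))) := by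
    rw [show univ.erase (1 : Fin 4) = {0, 2, 3} from by decide,
      Finset.prod_insert (by decide), Finset.prod_insert (by decide),
      Finset.prod_singleton]
  have e2 : ∏ j ∈ univ.erase (2 : Fin 4), (E - lam j • (1 : L))
      = (E - lam 0 • (1:L)) * ((E - lam 1 • (1:L)) * (E - lam 3 • (1:L))) := by
    rw [show univ.erase (2 : Fin 4) = {0, 1, 3} from by decide,
      Finset.prod_insert (by decide), Finset.prod_insert (by decide),
      Finset.prod_singleton]
  have e3 : ∏ j ∈ univ.erase (3 : Fin 4), (E - lam j • (1 : L))
      = (E - lam 0 • (1:L)) * ((E - lam 1 • (1:L)) * (E - lam 2 • (1:L))) := by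
    rw [show univ.erase (3 : Fin 4) = {0, 1, 2} from by decide,
      Finset.prod_insert (by decide), Finset.prod_insert (by decide),
      Finset.prod_singleton]
  rw [e0, e1, e2, e3]
  set F0 := E - lam 0 • (1 : L) with hF0
  set F1 := E - lam 1 • (1 : L) with hF1
  set F2 := E - lam 2 • (1 : L) with hF2
  set F3 := E - lam 3 • (1 : L) with hF3
  -- full product vanishes
  have hfull0 : F0 * F1 * F2 * F3 = 0 := by
    rw [← hCH, Fin.prod_univ_four]
  have hbr_full : br U (F0 * F1 * F2 * F3) = 0 := by rw [hfull0, br0]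
  -- quasi-derivation rule for br U on products
  have hPmul : ∀ X Y : L, br U (X * Y)
      = br U X * Y + X * br U Y + ((m : L) + 1) * (E ^ m * (X * Y)) := by
    intro X Y
    have h := hPk m X Y
    simp only [Pform] at h
    linear_combination h
  have hA := hPmul F0 F1
  have hB := hPmul (F0 * F1) F2
  have hC := hPmul (F0 * F1 * F2) F3
  linear_combination hbr_full - hC - F3 * hB - (F2 * F3) * hA
    - 3 * ((m : L) + 1) * (E ^ m) * hfull0
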